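/- Let W be a set of cardinality ℵ₁. Let FR(W) be the Boolean algebra of clopen subsets of the Cantor space {0,1}^W, with generators x_α = {f ∈ {0,1}^W : f(α) = 1} for α ∈ W, and let FinCo(W) be the Boolean algebra of subsets of W that are finite or cofinite. Then the set X = {(x_α, {α}) : α ∈ W} ∪ {(0, 1)} (where (0,1) is the pair of the bottom element of FR(W) and the top element of FinCo(W)) is a 3-independent generating set of the product Boolean algebra FR(W) × FinCo(W); in particular, this algebra is 3-free. -/

import Mathlib

universe u v

/-- The finite–cofinite algebra on `W`: subsets of `W` that are finite or cofinite. -/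
def FinCo (W : Type u) : Type u := {s : Set W // s.Finite ∨ sᶜ.Finite}

namespace FinCo

variable {W : Type u}

instance : Max (FinCo W) :=
  ⟨fun s t => ⟨s.1 ∪ t.1, by
    rcases s.2 with hs | hs
    · rcases t.2 with ht | ht
      · exact Or.inl (hs.union ht)
      · exact Or.inr (ht.subset (by rw [Set.compl_union]; exact Set.inter_subset_right))
    · exact Or.inr (hs.subset (by rw [Set.compl_union]; exact Set.inter_subset_left))⟩⟩

instance : Min (FinCo W) :=
  ⟨fun s t => ⟨s.1 ∩ t.1, by
    rcases s.2 with hs | hs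
    · exact Or.inl (hs.subset Set.inter_subset_left)
    · rcases t.2 with ht | ht
      · exact Or.inl (ht.subset Set.inter_subset_right)
      · exact Or.inr (by rw [Set.compl_inter]; exact hs.union ht)⟩⟩

instance : Top (FinCo W) := ⟨⟨Set.univ, Or.inr (by simp)⟩⟩

instance : Bot (FinCo W) := ⟨⟨∅, Or.inl (Set.finite_empty)⟩⟩

instance : Compl (FinCo W) := ⟨fun s => ⟨s.1ᶜ, by rcases s.2 with hs | hs <;> simp [hs]⟩⟩

instance : SDiff (FinCo W) := ⟨fun s t => s ⊓ tᶜ⟩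

instance : HImp (FinCo W) := ⟨fun s t => sᶜ ⊔ t⟩

instance : LE (FinCo W) := ⟨fun s t => s.1 ≤ t.1⟩

instance : LT (FinCo W) := ⟨fun s t => s.1 < t.1⟩

instance : BooleanAlgebra (FinCo W) :=
  Function.Injective.booleanAlgebra (fun s : FinCo W => s.1) Subtype.coe_injective
    Iff.rfl Iff.rfl
    (fun _ _ => rfl) (fun _ _ => rfl) rfl rfl (fun _ => rfl)
    (fun a b => (Set.diff_eq a.1 b.1).symm)
    (fun a b => by show a.1ᶜ ∪ b.1 = a.1 ⇨ b.1; rw [himp_eq]; exact Set.union_comm _ _)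

end FinCo

open TopologicalSpace in
/-- The free Boolean algebra on `W` generators, realized as the algebra of clopen
subsets of the Cantor space `{0,1}^W`. -/
abbrev FR (W : Type u) : Type u := Clopens (W → Bool)

/-- The generator `x_a = {f ∈ {0,1}^W : f a = 1}` of `FR W`. -/
def xGen {W : Type u} (a : W) : FR W :=
  ⟨(fun f : W → Bool => f a) ⁻¹' {true}, (isClopen_discrete _).preimage (continuous_apply a)⟩

/-- The element `{a}` of the finite–cofinite algebra on `W`. -/
def singletonFinCo {W : Type u} (a : W) : FinCo W :=
  ⟨{a}, Or.inl (Set.finite_singleton a)⟩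

/-- `X` is `n`-independent: `⊥ ∉ X`, (⊥1) no nonempty finite `F ⊆ X` has `sup F = ⊤`,
(⊥2ₙ) any nonempty finite `F ⊆ X` with `inf F = ⊥` has a subset of size `≤ n` with
infimum `⊥`, and (⊥3) if `⊥ ≠ inf F ≤ sup G` then `F ∩ G ≠ ∅`. -/
def NIndependent {α : Type u} [BooleanAlgebra α] (n : ℕ) (X : Set α) : Prop :=
  ⊥ ∉ X ∧
  (∀ F : Finset α, ↑F ⊆ X → F.Nonempty → F.sup id ≠ ⊤) ∧
  (∀ F : Finset α, ↑F ⊆ X → F.Nonempty → F.inf id = ⊥ →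
    ∃ F' ⊆ F, F'.card ≤ n ∧ F'.inf id = ⊥) ∧
  (∀ F G : Finset α, ↑F ⊆ X → ↑G ⊆ X → F.Nonempty → G.Nonempty →
    F.inf id ≠ ⊥ → F.inf id ≤ G.sup id → ((F : Set α) ∩ (G : Set α)).Nonempty)

/-- The elements of the Boolean subalgebra generated by `X`. -/
inductive InSubalgebra {α : Type u} [BooleanAlgebra α] (X : Set α) : α → Prop
  | base {a : α} : a ∈ X → InSubalgebra X a
  | bot : InSubalgebra X ⊥
  | top : InSubalgebra X ⊤
  | compl {a : α} : InSubalgebra X a → InSubalgebra X aᶜ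
  | sup {a b : α} : InSubalgebra X a → InSubalgebra X b → InSubalgebra X (a ⊔ b)
  | inf {a b : α} : InSubalgebra X a → InSubalgebra X b → InSubalgebra X (a ⊓ b)

/-- `X` generates `A`: the smallest Boolean subalgebra of `A` containing `X` is `A`. -/
def Generates {α : Type u} [BooleanAlgebra α] (X : Set α) : Prop :=
  ∀ a : α, InSubalgebra X a

/-- A function `f` (restricted to `X`) is `n`-preserving: whenever `a₀, …, a_{n-1} ∈ X`
have infimum `⊥`, so do their images. -/
def NPreserving {α : Type u} {β : Type v} [BooleanAlgebra α] [BooleanAlgebra β]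
    (n : ℕ) (X : Set α) (f : α → β) : Prop :=
  ∀ a : Fin n → α, (∀ i, a i ∈ X) → Finset.univ.inf a = ⊥ → Finset.univ.inf (f ∘ a) = ⊥

/-- `A` is `n`-free over `X`: every `n`-preserving function from `X` into any nontrivial
Boolean algebra extends to a unique Boolean algebra homomorphism. -/
def NFree {α : Type u} [BooleanAlgebra α] (n : ℕ) (X : Set α) : Prop :=
  ∀ (β : Type v) [BooleanAlgebra β] [Nontrivial β] (f : α → β),
    NPreserving n X f → ∃! g : BoundedLatticeHom α β, ∀ x ∈ X, g x = f x


/-! ### Auxiliary infrastructure -/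

open TopologicalSpace

namespace FrAux

variable {W : Type u}

theorem fst_finset_inf {γ : Type*} {α α' : Type*} [Lattice α] [OrderTop α] [Lattice α']
    [OrderTop α'] (F : Finset γ) (g : γ → α × α') : (F.inf g).1 = F.inf fun i => (g i).1 := by
  induction F using Finset.cons_induction with
  | empty => rfl
  | cons a F ha ih => rw [Finset.inf_cons, Finset.inf_cons, ← ih]; rfl

theorem snd_finset_inf {γ : Type*} {α α' : Type*} [Lattice α] [OrderTop α] [Lattice α']
    [OrderTop α'] (F : Finset γ) (g : γ → α × α') : (F.inf g).2 = F.inf fun i => (g i).2 := by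
  induction F using Finset.cons_induction with
  | empty => rfl
  | cons a F ha ih => rw [Finset.inf_cons, Finset.inf_cons, ← ih]; rfl

theorem fst_finset_sup {γ : Type*} {α α' : Type*} [Lattice α] [OrderBot α] [Lattice α']
    [OrderBot α'] (F : Finset γ) (g : γ → α × α') : (F.sup g).1 = F.sup fun i => (g i).1 := by
  induction F using Finset.cons_induction with
  | empty => rfl
  | cons a F ha ih => rw [Finset.sup_cons, Finset.sup_cons, ← ih]; rfl

theorem snd_finset_sup {γ : Type*} {α α' : Type*} [Lattice α] [OrderBot α] [Lattice α']
    [OrderBot α'] (F : Finset γ) (g : γ → α × α') : (F.sup g).2 = F.sup fun i => (g i).2 := by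
  induction F using Finset.cons_induction with
  | empty => rfl
  | cons a F ha ih => rw [Finset.sup_cons, Finset.sup_cons, ← ih]; rfl

theorem mem_clopens_finset_inf {X : Type*} [TopologicalSpace X] {γ : Type*} {F : Finset γ}
    {g : γ → Clopens X} {x : X} : x ∈ F.inf g ↔ ∀ i ∈ F, x ∈ g i := by
  induction F using Finset.cons_induction with
  | empty => simp only [Finset.inf_empty, Finset.notMem_empty, false_implies, implies_true,
      iff_true]; exact Set.mem_univ x
  | cons a F ha ih =>
    rw [Finset.inf_cons, ← SetLike.mem_coe, Clopens.coe_inf, Set.mem_inter_iff,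
      SetLike.mem_coe, SetLike.mem_coe, ih]
    simp only [Finset.mem_cons]
    constructor
    · rintro ⟨h1, h2⟩ i (rfl | hi)
      · exact h1
      · exact h2 i hi
    · intro h; exact ⟨h a (Or.inl rfl), fun i hi => h i (Or.inr hi)⟩

theorem mem_clopens_finset_sup {X : Type*} [TopologicalSpace X] {γ : Type*} {F : Finset γ}
    {g : γ → Clopens X} {x : X} : x ∈ F.sup g ↔ ∃ i ∈ F, x ∈ g i := by
  induction F using Finset.cons_induction with
  | empty => simp only [Finset.sup_empty, Finset.notMem_empty, false_and, exists_false,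
      iff_false]; intro h; exact h
  | cons a F ha ih =>
    rw [Finset.sup_cons, ← SetLike.mem_coe, Clopens.coe_sup, Set.mem_union,
      SetLike.mem_coe, SetLike.mem_coe, ih]
    simp only [Finset.mem_cons]
    constructor
    · rintro (h | ⟨i, hi, hx⟩)
      · exact ⟨a, Or.inl rfl, h⟩
      · exact ⟨i, Or.inr hi, hx⟩
    · rintro ⟨i, (rfl | hi), hx⟩
      · exact Or.inl hx
      · exact Or.inr ⟨i, hi, hx⟩

theorem finco_sup_val (s t : FinCo W) : (s ⊔ t).1 = s.1 ∪ t.1 := rfl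
theorem finco_inf_val (s t : FinCo W) : (s ⊓ t).1 = s.1 ∩ t.1 := rfl
theorem finco_top_val : ((⊤ : FinCo W)).1 = Set.univ := rfl
theorem finco_bot_val : ((⊥ : FinCo W)).1 = ∅ := rfl
theorem finco_compl_val (s : FinCo W) : (sᶜ).1 = s.1ᶜ := rfl

theorem finco_ext {s t : FinCo W} (h : s.1 = t.1) : s = t := Subtype.ext h

theorem mem_finco_finset_sup {γ : Type*} {F : Finset γ} {g : γ → FinCo W} {x : W} :
    x ∈ (F.sup g).1 ↔ ∃ i ∈ F, x ∈ (g i).1 := by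
  induction F using Finset.cons_induction with
  | empty => simp [finco_bot_val]
  | cons a F ha ih =>
    rw [Finset.sup_cons, finco_sup_val]
    simp only [Set.mem_union, ih, Finset.mem_cons]
    constructor
    · rintro (h | ⟨i, hi, hx⟩)
      · exact ⟨a, Or.inl rfl, h⟩
      · exact ⟨i, Or.inr hi, hx⟩
    · rintro ⟨i, (rfl | hi), hx⟩
      · exact Or.inl hx
      · exact Or.inr ⟨i, hi, hx⟩

theorem finco_finset_sup_finite {γ : Type*} {F : Finset γ} {g : γ → FinCo W}
    (h : ∀ i ∈ F, (g i).1.Finite) : (F.sup g).1.Finite := by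
  induction F using Finset.cons_induction with
  | empty => simp [finco_bot_val]
  | cons a F ha ih =>
    rw [Finset.sup_cons, finco_sup_val]
    exact (h a (Finset.mem_cons_self a F)).union (ih fun i hi => h i (Finset.mem_cons_of_mem hi))

theorem mem_xGen {f : W → Bool} {a : W} : f ∈ xGen a ↔ f a = true := by
  show f a ∈ ({true} : Set Bool) ↔ _
  simp

theorem mem_xGen_compl {f : W → Bool} {a : W} : f ∈ (xGen a)ᶜ ↔ f a = false := by
  rw [← SetLike.mem_coe, Clopens.coe_compl, Set.mem_compl_iff, SetLike.mem_coe, mem_xGen]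
  simp

theorem xGen_ne_bot (a : W) : xGen a ≠ ⊥ := by
  intro h
  have : (fun _ : W => true) ∈ xGen a := mem_xGen.2 rfl
  rw [h, ← SetLike.mem_coe, Clopens.coe_bot] at this
  exact this

/-- `c` is determined by coordinates in `S`. -/
def Det (S : Finset W) (c : FR W) : Prop :=
  ∀ f g : W → Bool, (∀ a ∈ S, f a = g a) → f ∈ c → g ∈ c

theorem Det.mono {S S' : Finset W} {c : FR W} (h : Det S c) (hss : S ⊆ S') : Det S' c :=
  fun f g hfg hf => h f g (fun a ha => hfg a (hss ha)) hf

theorem Det.inf {S : Finset W} {c d : FR W} (hc : Det S c) (hd : Det S d) : Det S (c ⊓ d) := by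
  intro f g hfg hf
  rw [← SetLike.mem_coe, Clopens.coe_inf] at hf ⊢
  exact ⟨hc f g hfg hf.1, hd f g hfg hf.2⟩

theorem Det.sup {S : Finset W} {c d : FR W} (hc : Det S c) (hd : Det S d) : Det S (c ⊔ d) := by
  intro f g hfg hf
  rw [← SetLike.mem_coe, Clopens.coe_sup] at hf ⊢
  exact hf.imp (hc f g hfg) (hd f g hfg)

theorem det_xGen (a : W) : Det {a} (xGen a) := by
  intro f g hfg hf
  rw [mem_xGen] at hf ⊢
  rw [← hfg a (Finset.mem_singleton_self a)]; exact hf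

theorem exists_det (c : FR W) : ∃ S : Finset W, Det S c := by
  classical
  have hopen : IsOpen (c : Set (W → Bool)) := c.isClopen.isOpen
  rw [isOpen_pi_iff] at hopen
  choose I u hu hsub using hopen
  have hcpt : IsCompact (c : Set (W → Bool)) := c.isClopen.isClosed.isCompact
  obtain ⟨t, ht⟩ := hcpt.elim_finite_subcover
      (fun fz : {f // f ∈ (c : Set (W → Bool))} => (↑(I fz.1 fz.2) : Set W).pi (u fz.1 fz.2))
      (fun fz => isOpen_set_pi (Finset.finite_toSet _) fun a ha => (hu fz.1 fz.2 a ha).1)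
      (fun f hf => Set.mem_iUnion.2 ⟨⟨f, hf⟩, fun a ha => (hu f hf a ha).2⟩)
  refine ⟨t.sup fun fz => I fz.1 fz.2, ?_⟩
  intro f g hfg hf
  have := ht hf
  rw [Set.mem_iUnion₂] at this
  obtain ⟨fz, hfz, hmem⟩ := this
  have hg : g ∈ (↑(I fz.1 fz.2) : Set W).pi (u fz.1 fz.2) := by
    intro a ha
    rw [← hfg a (Finset.mem_of_subset (Finset.le_sup (f := fun fz : {f // f ∈ (c : Set (W → Bool))} => I fz.1 fz.2) hfz) ha)]
    exact hmem a ha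
  exact hsub fz.1 fz.2 hg

end FrAux

namespace FrAux

variable {W : Type u}

/-- The generator pairs. -/
def P (a : W) : FR W × FinCo W := (xGen a, singletonFinCo a)

/-- The extra element `(⊥, ⊤)`. -/
def zElt : FR W × FinCo W := ((⊥ : FR W), (⊤ : FinCo W))

/-- The distinguished generating set. -/
def Xset (W : Type u) : Set (FR W × FinCo W) :=
  (Set.range fun a : W => ((xGen a, singletonFinCo a) : FR W × FinCo W)) ∪
    {((⊥ : FR W), (⊤ : FinCo W))}

theorem mem_Xset {x : FR W × FinCo W} (hx : x ∈ Xset W) : (∃ a : W, x = P a) ∨ x = zElt := by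
  rcases hx with ⟨a, rfl⟩ | hx
  · exact Or.inl ⟨a, rfl⟩
  · exact Or.inr hx

theorem P_mem_Xset (a : W) : P a ∈ Xset W := Or.inl ⟨a, rfl⟩
theorem zElt_mem_Xset : zElt ∈ Xset W := Or.inr rfl

theorem singletonFinCo_val (a : W) : (singletonFinCo a).1 = {a} := rfl

theorem clopens_le_iff {X : Type*} [TopologicalSpace X] {c d : TopologicalSpace.Clopens X} :
    c ≤ d ↔ (c : Set X) ⊆ (d : Set X) := by
  rw [← inf_eq_left, ← SetLike.coe_set_eq, TopologicalSpace.Clopens.coe_inf, Set.inter_eq_left]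

theorem finco_le_iff {s t : FinCo W} : s ≤ t ↔ s.1 ⊆ t.1 := by
  exact Iff.rfl

theorem mem_finco_finset_inf {γ : Type*} {F : Finset γ} {g : γ → FinCo W} {x : W} :
    x ∈ (F.inf g).1 ↔ ∀ i ∈ F, x ∈ (g i).1 := by
  induction F using Finset.cons_induction with
  | empty =>
    simp only [Finset.inf_empty, Finset.notMem_empty, false_implies, implies_true, iff_true]
    exact Set.mem_univ x
  | cons a F ha ih =>
    rw [Finset.inf_cons, finco_inf_val]
    simp only [Set.mem_inter_iff, ih, Finset.mem_cons]
    constructor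
    · rintro ⟨h1, h2⟩ i (rfl | hi)
      · exact h1
      · exact h2 i hi
    · intro h; exact ⟨h a (Or.inl rfl), fun i hi => h i (Or.inr hi)⟩

theorem triple_inf_bot {a b : W} (hab : a ≠ b) : zElt ⊓ (P a ⊓ P b) = (⊥ : FR W × FinCo W) := by
  apply Prod.ext
  · show (⊥ : FR W) ⊓ (xGen a ⊓ xGen b) = ⊥
    rw [bot_inf_eq]
  · show (⊤ : FinCo W) ⊓ (singletonFinCo a ⊓ singletonFinCo b) = ⊥
    rw [top_inf_eq]
    apply finco_ext
    rw [finco_inf_val, singletonFinCo_val, singletonFinCo_val, finco_bot_val]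
    exact Set.singleton_inter_eq_empty.2 (by simp [hab])

theorem indep [Infinite W] : NIndependent 3 (Xset W) := by
  classical
  have hWne : Nonempty W := inferInstance
  obtain ⟨w0⟩ := hWne
  refine ⟨?_, ?_, ?_, ?_⟩
  · -- ⊥ ∉ X
    intro h
    rcases mem_Xset h with ⟨a, ha⟩ | hz
    · have : (⊥ : FR W × FinCo W).2 = (P a).2 := by rw [ha]
      have h2 : (∅ : Set W) = {a} := congrArg Subtype.val this
      exact (Set.singleton_ne_empty a) h2.symm
    · have : (⊥ : FR W × FinCo W).2 = zElt.2 := by rw [hz]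
      have h2 : (∅ : Set W) = Set.univ := congrArg Subtype.val this
      exact absurd (h2 ▸ Set.mem_univ w0) (Set.notMem_empty w0)
  · -- ⊥1
    intro F hF hne hTop
    have h1 : (F.sup id).1 = (⊤ : FR W) := by rw [hTop]; rfl
    have hmem : (fun _ : W => false) ∈ (F.sup id).1 := by
      rw [h1, ← SetLike.mem_coe, TopologicalSpace.Clopens.coe_top]; exact Set.mem_univ _
    rw [fst_finset_sup, mem_clopens_finset_sup] at hmem
    obtain ⟨p, hp, hmem⟩ := hmem
    rcases mem_Xset (hF hp) with ⟨a, rfl⟩ | rfl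
    · exact Bool.false_ne_true (mem_xGen.1 hmem)
    · rw [← SetLike.mem_coe] at hmem; exact hmem
  · -- ⊥2₃
    intro F hF hne hbot
    have hz : zElt ∈ F := by
      by_contra hz
      have hmem : (fun _ : W => true) ∈ (F.inf id).1 := by
        rw [fst_finset_inf, mem_clopens_finset_inf]
        intro p hp
        rcases mem_Xset (hF hp) with ⟨a, rfl⟩ | rfl
        · exact mem_xGen.2 rfl
        · exact absurd hp hz
      rw [hbot] at hmem
      rw [← SetLike.mem_coe] at hmem; exact hmem
    have hex : ∃ a b : W, a ≠ b ∧ P a ∈ F ∧ P b ∈ F := by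
      by_contra hex
      push_neg at hex
      by_cases hgen : ∃ a : W, P a ∈ F
      · obtain ⟨a, ha⟩ := hgen
        have hmem : a ∈ (F.inf id).2.1 := by
          rw [snd_finset_inf, mem_finco_finset_inf]
          intro p hp
          rcases mem_Xset (hF hp) with ⟨b, rfl⟩ | rfl
          · have : a = b := by
              by_contra hab
              exact hex a b hab ha hp
            exact show a ∈ ({b} : Set W) from this ▸ rfl
          · exact Set.mem_univ a
        rw [hbot] at hmem
        exact Set.notMem_empty a hmem
      · have hmem : w0 ∈ (F.inf id).2.1 := by
          rw [snd_finset_inf, mem_finco_finset_inf]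
          intro p hp
          rcases mem_Xset (hF hp) with ⟨b, rfl⟩ | rfl
          · exact absurd ⟨b, hp⟩ hgen
          · exact Set.mem_univ w0
        rw [hbot] at hmem
        exact Set.notMem_empty w0 hmem
    obtain ⟨a, b, hab, ha, hb⟩ := hex
    refine ⟨{zElt, P a, P b}, ?_, ?_, ?_⟩
    · intro x hx
      simp only [Finset.mem_insert, Finset.mem_singleton] at hx
      rcases hx with rfl | rfl | rfl <;> assumption
    · calc ({zElt, P a, P b} : Finset (FR W × FinCo W)).card
          ≤ ({P a, P b} : Finset (FR W × FinCo W)).card + 1 := Finset.card_insert_le _ _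
        _ ≤ ({P b} : Finset (FR W × FinCo W)).card + 1 + 1 :=
            Nat.add_le_add_right (Finset.card_insert_le _ _) 1
        _ ≤ 3 := by rw [Finset.card_singleton]
    · rw [Finset.inf_insert, Finset.inf_insert, Finset.inf_singleton]
      exact triple_inf_bot hab
  · -- ⊥3
    intro F G hF hG hFne hGne hne hle
    by_cases hz : zElt ∈ F
    · by_cases hgen2 : ∃ a b : W, a ≠ b ∧ P a ∈ F ∧ P b ∈ F
      · exfalso
        apply hne
        obtain ⟨a, b, hab, ha, hb⟩ := hgen2
        have h1 : F.inf id ≤ zElt ⊓ (P a ⊓ P b) :=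
          le_inf (Finset.inf_le hz) (le_inf (Finset.inf_le ha) (Finset.inf_le hb))
        rw [triple_inf_bot hab] at h1
        exact le_bot_iff.1 h1
      · push_neg at hgen2
        by_cases hgen : ∃ a : W, P a ∈ F
        · obtain ⟨a, ha⟩ := hgen
          have hmemF : a ∈ (F.inf id).2.1 := by
            rw [snd_finset_inf, mem_finco_finset_inf]
            intro p hp
            rcases mem_Xset (hF hp) with ⟨b, rfl⟩ | rfl
            · have : a = b := by
                by_contra hab
                exact hgen2 a b hab ha hp
              exact show a ∈ ({b} : Set W) from this ▸ rfl
            · exact Set.mem_univ a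
          have hmemG : a ∈ (G.sup id).2.1 :=
            (finco_le_iff.1 (Prod.le_def.1 hle).2) hmemF
          rw [snd_finset_sup, mem_finco_finset_sup] at hmemG
          obtain ⟨p, hp, hmem⟩ := hmemG
          rcases mem_Xset (hG hp) with ⟨b, rfl⟩ | rfl
          · have hmem' : a ∈ ({b} : Set W) := hmem
            rcases hmem' with rfl
            exact ⟨P a, ha, hp⟩
          · exact ⟨zElt, hz, hp⟩
        · -- F consists only of zElt
          by_cases hzG : zElt ∈ G
          · exact ⟨zElt, hz, hzG⟩
          · exfalso
            have huniv : ∀ x : W, x ∈ (G.sup id).2.1 := by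
              intro x
              have hmemF : x ∈ (F.inf id).2.1 := by
                rw [snd_finset_inf, mem_finco_finset_inf]
                intro p hp
                rcases mem_Xset (hF hp) with ⟨b, rfl⟩ | rfl
                · exact absurd ⟨b, hp⟩ hgen
                · exact Set.mem_univ x
              exact (finco_le_iff.1 (Prod.le_def.1 hle).2) hmemF
            have hfin : (G.sup id).2.1.Finite := by
              rw [snd_finset_sup]
              apply finco_finset_sup_finite
              intro p hp
              rcases mem_Xset (hG hp) with ⟨b, rfl⟩ | rfl
              · exact show ({b} : Set W).Finite from Set.finite_singleton b
              · exact absurd hp hzG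
            have : (Set.univ : Set W).Finite :=
              hfin.subset (fun x _ => huniv x) |>.subset (Set.subset_univ _) |>.subset
                (by intro x _; exact huniv x)
            exact Set.infinite_univ this
    · -- zElt ∉ F : use the indicator function of F's indices
      classical
      set f : W → Bool := fun w => if P w ∈ F then true else false with hf
      have hfF : f ∈ (F.inf id).1 := by
        rw [fst_finset_inf, mem_clopens_finset_inf]
        intro p hp
        rcases mem_Xset (hF hp) with ⟨a, rfl⟩ | rfl
        · exact mem_xGen.2 (if_pos hp)
        · exact absurd hp hz
      have hfG : f ∈ (G.sup id).1 :=
        (clopens_le_iff.1 (Prod.le_def.1 hle).1) hfF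
      rw [fst_finset_sup, mem_clopens_finset_sup] at hfG
      obtain ⟨p, hp, hmem⟩ := hfG
      rcases mem_Xset (hG hp) with ⟨b, rfl⟩ | rfl
      · have hb : (if P b ∈ F then true else false) = true := mem_xGen.1 hmem
        have hbF : P b ∈ F := by
          by_contra hbF
          rw [if_neg hbF] at hb
          exact Bool.false_ne_true hb
        exact ⟨P b, hbF, hp⟩
      · exact absurd (show f ∈ (∅ : Set (W → Bool)) from hmem) (Set.notMem_empty f)

end FrAux

namespace FrAux

variable {W : Type u}

theorem insub_finset_sup {α : Type*} [BooleanAlgebra α] {X : Set α} {γ : Type*} (F : Finset γ)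
    (g : γ → α) (h : ∀ i ∈ F, InSubalgebra X (g i)) : InSubalgebra X (F.sup g) := by
  induction F using Finset.cons_induction with
  | empty => exact InSubalgebra.bot
  | cons a F ha ih =>
    rw [Finset.sup_cons]
    exact InSubalgebra.sup (h a (Finset.mem_cons_self a F))
      (ih fun i hi => h i (Finset.mem_cons_of_mem hi))

theorem insub_finset_inf {α : Type*} [BooleanAlgebra α] {X : Set α} {γ : Type*} (F : Finset γ)
    (g : γ → α) (h : ∀ i ∈ F, InSubalgebra X (g i)) : InSubalgebra X (F.inf g) := by
  induction F using Finset.cons_induction with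
  | empty => exact InSubalgebra.top
  | cons a F ha ih =>
    rw [Finset.inf_cons]
    exact InSubalgebra.inf (h a (Finset.mem_cons_self a F))
      (ih fun i hi => h i (Finset.mem_cons_of_mem hi))

section Cyl

variable [DecidableEq W]

/-- The cylinder over `S` with positive coordinates `T`. -/
def cyl (S T : Finset W) : FR W := S.inf fun a => if a ∈ T then xGen a else (xGen a)ᶜ

theorem mem_cyl {S T : Finset W} {f : W → Bool} :
    f ∈ cyl S T ↔ ∀ a ∈ S, (f a = true ↔ a ∈ T) := by
  unfold cyl
  rw [mem_clopens_finset_inf]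
  apply forall_congr'
  intro a
  apply imp_congr_right
  intro _
  by_cases hT : a ∈ T
  · rw [if_pos hT, mem_xGen]
    simp [hT]
  · rw [if_neg hT, mem_xGen_compl]
    simp [hT]

theorem indicator_mem_cyl {S T : Finset W} :
    (fun w => if w ∈ T then true else false) ∈ cyl S T := by
  rw [mem_cyl]
  intro a _
  by_cases hT : a ∈ T <;> simp [hT]

open Classical in
/-- The cylinders over `S` contained in `c`. -/
noncomputable def filt (S : Finset W) (c : FR W) : Finset (Finset W) :=
  S.powerset.filter fun T => (cyl S T : Set (W → Bool)) ⊆ (c : Set (W → Bool))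

theorem mem_filt {S T : Finset W} {c : FR W} :
    T ∈ filt S c ↔ T ⊆ S ∧ (cyl S T : Set (W → Bool)) ⊆ (c : Set (W → Bool)) := by
  classical
  unfold filt
  rw [Finset.mem_filter, Finset.mem_powerset]

theorem det_eq_sup_cyl {S : Finset W} {c : FR W} (hdet : Det S c) :
    c = (filt S c).sup (cyl S) := by
  apply SetLike.ext
  intro f
  rw [mem_clopens_finset_sup]
  constructor
  · intro hf
    refine ⟨S.filter (fun a => f a = true), mem_filt.2 ⟨Finset.filter_subset _ _, ?_⟩, ?_⟩
    · intro g hg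
      have hgc : g ∈ cyl S (S.filter fun a => f a = true) := hg
      apply hdet f g ?_ hf
      intro a ha
      have hiff := mem_cyl.1 hgc a ha
      rw [Finset.mem_filter] at hiff
      cases hfa : f a with
      | true => exact (hiff.2 ⟨ha, hfa⟩).symm
      | false =>
        cases hga : g a with
        | true => exact absurd ((hiff.1 hga).2) (by rw [hfa]; simp)
        | false => rfl
    · rw [mem_cyl]
      intro a ha
      rw [Finset.mem_filter]
      simp [ha]
  · rintro ⟨T, hT, hf⟩
    exact (mem_filt.1 hT).2 hf

theorem insub_fst_pair (c : FR W) : InSubalgebra (Xset W) ((c, (⊥ : FinCo W))) := by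
  have htb : InSubalgebra (Xset W) (((⊤ : FR W), (⊥ : FinCo W))) := by
    have h := InSubalgebra.compl (InSubalgebra.base (zElt_mem_Xset (W := W)))
    have heq : (zElt (W := W))ᶜ = ((⊤ : FR W), (⊥ : FinCo W)) := by
      apply Prod.ext
      · show (⊥ : FR W)ᶜ = ⊤; exact compl_bot
      · show (⊤ : FinCo W)ᶜ = ⊥; exact compl_top
    rwa [heq] at h
  have hxa : ∀ a : W, InSubalgebra (Xset W) ((xGen a, (⊥ : FinCo W))) := by
    intro a
    have h := InSubalgebra.inf (InSubalgebra.base (P_mem_Xset a)) htb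
    have heq : P a ⊓ ((⊤ : FR W), (⊥ : FinCo W)) = (xGen a, (⊥ : FinCo W)) := by
      apply Prod.ext
      · show xGen a ⊓ ⊤ = xGen a; exact inf_top_eq _
      · show singletonFinCo a ⊓ ⊥ = ⊥; exact inf_bot_eq _
    rwa [heq] at h
  have hxac : ∀ a : W, InSubalgebra (Xset W) (((xGen a)ᶜ, (⊥ : FinCo W))) := by
    intro a
    have h := InSubalgebra.inf (InSubalgebra.compl (InSubalgebra.base (P_mem_Xset a))) htb
    have heq : (P a)ᶜ ⊓ ((⊤ : FR W), (⊥ : FinCo W)) = ((xGen a)ᶜ, (⊥ : FinCo W)) := by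
      apply Prod.ext
      · show (xGen a)ᶜ ⊓ ⊤ = (xGen a)ᶜ; exact inf_top_eq _
      · show (singletonFinCo a)ᶜ ⊓ ⊥ = ⊥; exact inf_bot_eq _
    rwa [heq] at h
  obtain ⟨S, hdet⟩ := exists_det c
  have hcylpair : ∀ T : Finset W, InSubalgebra (Xset W) ((cyl S T, (⊥ : FinCo W))) := by
    intro T
    have h := InSubalgebra.inf htb
      (insub_finset_inf S (fun a => if a ∈ T then (xGen a, (⊥ : FinCo W))
          else ((xGen a)ᶜ, (⊥ : FinCo W)))
        (fun a _ => by
          by_cases hT : a ∈ T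
          · rw [if_pos hT]; exact hxa a
          · rw [if_neg hT]; exact hxac a))
    have heq : ((⊤ : FR W), (⊥ : FinCo W)) ⊓
        (S.inf fun a => if a ∈ T then (xGen a, (⊥ : FinCo W)) else ((xGen a)ᶜ, (⊥ : FinCo W)))
        = (cyl S T, (⊥ : FinCo W)) := by
      apply Prod.ext
      · show (⊤ : FR W) ⊓ _ = cyl S T
        rw [top_inf_eq, fst_finset_inf]
        unfold cyl
        apply Finset.inf_congr rfl
        intro a _
        by_cases hT : a ∈ T <;> simp [hT]
      · show (⊥ : FinCo W) ⊓ _ = ⊥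
        exact bot_inf_eq _
    rwa [heq] at h
  have heq : (c, (⊥ : FinCo W)) = (filt S c).sup (fun T => (cyl S T, (⊥ : FinCo W))) := by
    apply Prod.ext
    · show c = _
      rw [fst_finset_sup]
      exact det_eq_sup_cyl hdet
    · show (⊥ : FinCo W) = _
      rw [snd_finset_sup]
      exact (Finset.sup_bot _).symm
  rw [heq]
  exact insub_finset_sup _ _ fun T _ => hcylpair T

end Cyl

theorem insub_snd_pair_finite (v : FinCo W) (hv : v.1.Finite) :
    InSubalgebra (Xset W) (((⊥ : FR W), v)) := by
  have heq : ((⊥ : FR W), v) = hv.toFinset.sup (fun a => zElt ⊓ P a) := by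
    apply Prod.ext
    · show (⊥ : FR W) = _
      rw [fst_finset_sup]
      symm
      rw [← Finset.sup_bot (β := W) hv.toFinset]
      apply Finset.sup_congr rfl
      intro a _
      show (⊥ : FR W) ⊓ xGen a = ⊥
      exact bot_inf_eq _
    · show v = _
      rw [snd_finset_sup]
      apply finco_ext
      ext x
      rw [mem_finco_finset_sup]
      constructor
      · intro hx
        refine ⟨x, hv.mem_toFinset.2 hx, ?_⟩
        show x ∈ Set.univ ∩ {x}
        simp
      · rintro ⟨a, ha, hx⟩
        have : x ∈ Set.univ ∩ {a} := hx
        simp at this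
        subst this
        exact hv.mem_toFinset.1 ha
  rw [heq]
  exact insub_finset_sup _ _ fun a _ =>
    InSubalgebra.inf (InSubalgebra.base zElt_mem_Xset) (InSubalgebra.base (P_mem_Xset a))

theorem insub_snd_pair (v : FinCo W) : InSubalgebra (Xset W) (((⊥ : FR W), v)) := by
  rcases v.2 with hv | hv
  · exact insub_snd_pair_finite v hv
  · have h := InSubalgebra.inf (InSubalgebra.base (zElt_mem_Xset (W := W)))
      (InSubalgebra.compl (insub_snd_pair_finite vᶜ hv))
    have heq : zElt ⊓ ((⊥ : FR W), vᶜ)ᶜ = ((⊥ : FR W), v) := by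
      apply Prod.ext
      · show (⊥ : FR W) ⊓ (⊥ : FR W)ᶜ = ⊥
        exact bot_inf_eq _
      · show (⊤ : FinCo W) ⊓ vᶜᶜ = v
        rw [top_inf_eq, compl_compl]
    rwa [heq] at h

theorem generates : Generates (Xset W) := by
  classical
  intro p
  obtain ⟨c, v⟩ := p
  have heq : ((c, v) : FR W × FinCo W) = (c, (⊥ : FinCo W)) ⊔ ((⊥ : FR W), v) := by
    apply Prod.ext
    · show c = c ⊔ ⊥; rw [sup_bot_eq]
    · show v = ⊥ ⊔ v; rw [bot_sup_eq]
  rw [heq]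
  exact InSubalgebra.sup (insub_fst_pair c) (insub_snd_pair v)

end FrAux

namespace FrAux

section G1

variable {W : Type u} [DecidableEq W] {β : Type v} [BooleanAlgebra β]
variable (m : β) (b : W → β)

/-- The "block" of `m` determined by positive coordinates `T` within `S`. -/
def blk (S T : Finset W) : β := m ⊓ S.inf fun a => if a ∈ T then b a else (b a)ᶜ

theorem blk_le (S T : Finset W) : blk m b S T ≤ m := inf_le_left

theorem compl_inf_sup_inf (x h : β) : (xᶜ ⊓ h) ⊔ (x ⊓ h) = h := by
  rw [← inf_sup_right, compl_sup_eq_top, top_inf_eq]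

theorem blk_le_of_mem {S T : Finset W} {a : W} (haS : a ∈ S) (haT : a ∈ T) :
    blk m b S T ≤ b a := by
  refine inf_le_right.trans ((Finset.inf_le haS).trans ?_)
  rw [if_pos haT]

theorem blk_le_of_not_mem {S T : Finset W} {a : W} (haS : a ∈ S) (haT : a ∉ T) :
    blk m b S T ≤ (b a)ᶜ := by
  refine inf_le_right.trans ((Finset.inf_le haS).trans ?_)
  rw [if_neg haT]

theorem blk_pairwise {S T T' : Finset W} (hT : T ⊆ S) (hT' : T' ⊆ S) (hne : T ≠ T') :
    blk m b S T ⊓ blk m b S T' = ⊥ := by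
  have hex : ∃ a, (a ∈ T ∧ a ∉ T') ∨ (a ∈ T' ∧ a ∉ T) := by
    by_contra hcon
    push_neg at hcon
    apply hne
    apply Finset.Subset.antisymm
    · intro a ha
      exact (hcon a).1 ha
    · intro a ha
      exact (hcon a).2 ha
  obtain ⟨a, ⟨h1, h2⟩ | ⟨h1, h2⟩⟩ := hex
  · apply le_bot_iff.1
    refine (inf_le_inf (blk_le_of_mem m b (hT h1) h1)
      (blk_le_of_not_mem m b (hT h1) h2)).trans ?_
    rw [inf_compl_eq_bot]
  · apply le_bot_iff.1
    refine (inf_le_inf (blk_le_of_not_mem m b (hT' h1) h2)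
      (blk_le_of_mem m b (hT' h1) h1)).trans ?_
    rw [compl_inf_eq_bot]

theorem blk_insert_of_not_mem {a : W} {S T : Finset W} (haT : a ∉ T) :
    blk m b (insert a S) T = (b a)ᶜ ⊓ blk m b S T := by
  unfold blk
  rw [Finset.inf_insert, if_neg haT, inf_left_comm]

theorem blk_insert_insert {a : W} {S T : Finset W} (haS : a ∉ S) :
    blk m b (insert a S) (insert a T) = b a ⊓ blk m b S T := by
  unfold blk
  rw [Finset.inf_insert, if_pos (Finset.mem_insert_self a T)]
  rw [Finset.inf_congr rfl (g := fun x => if x ∈ T then b x else (b x)ᶜ) ?_, inf_left_comm]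
  intro x hx
  have hxa : x ≠ a := by rintro rfl; exact haS hx
  simp [Finset.mem_insert, hxa]

theorem sup_split {a : W} {S : Finset W} (A : Finset (Finset W)) (hA : ∀ T ∈ A, T ⊆ S)
    (haS : a ∉ S) :
    A.sup (blk m b (insert a S)) ⊔ (A.image (insert a)).sup (blk m b (insert a S)) =
      A.sup (blk m b S) := by
  rw [Finset.sup_image]
  simp only [Function.comp_def]
  rw [Finset.sup_congr rfl (g := fun T => (b a)ᶜ ⊓ blk m b S T)
    (fun T hT => blk_insert_of_not_mem m b (fun haT => haS (hA T hT haT)))]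
  rw [Finset.sup_congr rfl (g := fun T => b a ⊓ blk m b S T)
    (fun T _ => blk_insert_insert m b haS)]
  rw [← Finset.sup_inf_distrib_left, ← Finset.sup_inf_distrib_left]
  exact compl_inf_sup_inf _ _

theorem sup_powerset_blk (S : Finset W) : S.powerset.sup (blk m b S) = m := by
  induction S using Finset.induction_on with
  | empty =>
    rw [Finset.powerset_empty, Finset.sup_singleton]
    unfold blk
    rw [Finset.inf_empty, inf_top_eq]
  | @insert a S haS ih =>
    rw [Finset.powerset_insert, Finset.sup_union,
      sup_split m b S.powerset (fun T hT => Finset.mem_powerset.1 hT) haS, ih]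

theorem blk_sup_inter {S : Finset W} {A B : Finset (Finset W)} (hA : ∀ T ∈ A, T ⊆ S)
    (hB : ∀ T ∈ B, T ⊆ S) :
    A.sup (blk m b S) ⊓ B.sup (blk m b S) = (A ∩ B).sup (blk m b S) := by
  apply le_antisymm
  · rw [Finset.sup_inf_distrib_right]
    apply Finset.sup_le
    intro T hT
    rw [Finset.sup_inf_distrib_left]
    apply Finset.sup_le
    intro T' hT'
    by_cases hTT : T = T'
    · subst hTT
      exact inf_le_left.trans (Finset.le_sup (Finset.mem_inter.2 ⟨hT, hT'⟩))
    · rw [blk_pairwise m b (hA T hT) (hB T' hT') hTT]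
      exact bot_le
  · apply Finset.sup_le
    intro T hT
    rw [Finset.mem_inter] at hT
    exact le_inf (Finset.le_sup hT.1) (Finset.le_sup hT.2)

/-- The value of a clopen set when computed with coordinates `S`. -/
noncomputable def val (S : Finset W) (c : FR W) : β := (filt S c).sup (blk m b S)

theorem val_le (S : Finset W) (c : FR W) : val m b S c ≤ m :=
  Finset.sup_le fun T _ => blk_le m b S T

theorem val_bot (S : Finset W) : val m b S (⊥ : FR W) = ⊥ := by
  unfold val
  have : filt S (⊥ : FR W) = ∅ := by
    apply Finset.eq_empty_of_forall_notMem
    intro T hT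
    have h := (mem_filt.1 hT).2 (indicator_mem_cyl (S := S) (T := T))
    rw [TopologicalSpace.Clopens.coe_bot] at h
    exact h
  rw [this, Finset.sup_empty]

theorem val_top (S : Finset W) : val m b S (⊤ : FR W) = m := by
  unfold val
  have : filt S (⊤ : FR W) = S.powerset := by
    apply Finset.ext
    intro T
    rw [mem_filt, Finset.mem_powerset, TopologicalSpace.Clopens.coe_top]
    simp [Set.subset_univ]
  rw [this, sup_powerset_blk]

theorem filt_subset {S : Finset W} {c : FR W} : ∀ T ∈ filt S c, T ⊆ S :=
  fun _ hT => (mem_filt.1 hT).1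

theorem val_inf (S : Finset W) (c d : FR W) :
    val m b S (c ⊓ d) = val m b S c ⊓ val m b S d := by
  unfold val
  rw [blk_sup_inter m b filt_subset filt_subset]
  congr 1
  apply Finset.ext
  intro T
  rw [Finset.mem_inter, mem_filt, mem_filt, mem_filt, TopologicalSpace.Clopens.coe_inf,
    Set.subset_inter_iff]
  tauto

theorem cyl_subset_of_mem {S T : Finset W} {c : FR W} (hdet : Det S c) {f : W → Bool}
    (hf : f ∈ cyl S T) (hfc : f ∈ c) : (cyl S T : Set (W → Bool)) ⊆ (c : Set (W → Bool)) := by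
  intro g hg
  have hgc : g ∈ cyl S T := hg
  apply hdet f g ?_ hfc
  intro a ha
  have h1 := mem_cyl.1 hf a ha
  have h2 := mem_cyl.1 hgc a ha
  cases hfa : f a with
  | true => exact ((h2.2 (h1.1 hfa))).symm
  | false =>
    cases hga : g a with
    | true => rw [← hfa, h1.2 (h2.1 hga)]
    | false => rfl

theorem val_sup {S : Finset W} {c d : FR W} (hc : Det S c) (hd : Det S d) :
    val m b S (c ⊔ d) = val m b S c ⊔ val m b S d := by
  unfold val
  rw [← Finset.sup_union]
  congr 1
  apply Finset.ext
  intro T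
  rw [Finset.mem_union, mem_filt, mem_filt, mem_filt, TopologicalSpace.Clopens.coe_sup]
  constructor
  · rintro ⟨hTS, hsub⟩
    have hind := indicator_mem_cyl (S := S) (T := T)
    rcases hsub hind with hcase | hcase
    · exact Or.inl ⟨hTS, cyl_subset_of_mem hc hind hcase⟩
    · exact Or.inr ⟨hTS, cyl_subset_of_mem hd hind hcase⟩
  · rintro (⟨hTS, hsub⟩ | ⟨hTS, hsub⟩)
    · exact ⟨hTS, hsub.trans Set.subset_union_left⟩
    · exact ⟨hTS, hsub.trans Set.subset_union_right⟩

theorem cyl_insert_subset_iff {a : W} {S T : Finset W} {c : FR W} (hdet : Det S c)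
    (haS : a ∉ S) (haT : a ∉ T) :
    ((cyl (insert a S) T : Set (W → Bool)) ⊆ c ↔ (cyl S T : Set (W → Bool)) ⊆ c) := by
  constructor
  · intro h g hg
    have hgc : g ∈ cyl S T := hg
    have hg' : Function.update g a false ∈ cyl (insert a S) T := by
      rw [mem_cyl]
      intro x hx
      rcases Finset.mem_insert.1 hx with rfl | hxS
      · rw [Function.update_self]
        simp [haT]
      · have hxa : x ≠ a := by rintro rfl; exact haS hxS
        rw [Function.update_of_ne hxa]
        exact mem_cyl.1 hgc x hxS
    have hc' : Function.update g a false ∈ c := h hg'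
    refine hdet _ g (fun x hx => ?_) hc'
    have hxa : x ≠ a := by rintro rfl; exact haS hx
    exact Function.update_of_ne hxa _ _
  · intro h
    have : cyl (insert a S) T ≤ cyl S T := by
      unfold cyl
      rw [Finset.inf_insert]
      exact inf_le_right
    exact (clopens_le_iff.1 this).trans h

theorem cyl_insert_insert_subset_iff {a : W} {S T : Finset W} {c : FR W} (hdet : Det S c)
    (haS : a ∉ S) (hTS : T ⊆ S) :
    ((cyl (insert a S) (insert a T) : Set (W → Bool)) ⊆ c ↔
      (cyl S T : Set (W → Bool)) ⊆ c) := by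
  have hmemiff : ∀ g : W → Bool, g ∈ cyl S T →
      Function.update g a true ∈ cyl (insert a S) (insert a T) := by
    intro g hg
    rw [mem_cyl]
    intro x hx
    rcases Finset.mem_insert.1 hx with rfl | hxS
    · rw [Function.update_self]
      simp
    · have hxa : x ≠ a := by rintro rfl; exact haS hxS
      rw [Function.update_of_ne hxa]
      rw [Finset.mem_insert]
      have := mem_cyl.1 hg x hxS
      simp [hxa, this]
  constructor
  · intro h g hg
    have hc' : Function.update g a true ∈ c := h (hmemiff g hg)
    refine hdet _ g (fun x hx => ?_) hc'
    have hxa : x ≠ a := by rintro rfl; exact haS hx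
    exact Function.update_of_ne hxa _ _
  · intro h g hg
    have hgc : g ∈ cyl (insert a S) (insert a T) := hg
    -- g restricted satisfies cyl S T
    have hgST : g ∈ cyl S T := by
      rw [mem_cyl]
      intro x hx
      have hxa : x ≠ a := by rintro rfl; exact haS hx
      have := mem_cyl.1 hgc x (Finset.mem_insert_of_mem hx)
      rw [Finset.mem_insert] at this
      simp [hxa] at this
      exact this
    exact h hgST

theorem filt_insert {a : W} {S : Finset W} {c : FR W} (hdet : Det S c) (haS : a ∉ S) :
    filt (insert a S) c = filt S c ∪ (filt S c).image (insert a) := by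
  apply Finset.ext
  intro T'
  rw [Finset.mem_union, Finset.mem_image]
  constructor
  · intro h
    obtain ⟨hsub, hcyl⟩ := mem_filt.1 h
    by_cases haT : a ∈ T'
    · right
      have herase : T'.erase a ⊆ S := by
        intro x hx
        have hxa := Finset.ne_of_mem_erase hx
        rcases Finset.mem_insert.1 (hsub (Finset.mem_of_mem_erase hx)) with h' | h'
        · exact absurd h' hxa
        · exact h'
      refine ⟨T'.erase a, mem_filt.2 ⟨herase, ?_⟩, Finset.insert_erase haT⟩
      have hre : insert a (T'.erase a) = T' := Finset.insert_erase haT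
      rw [← (cyl_insert_insert_subset_iff hdet haS herase), hre]
      exact hcyl
    · left
      have hTS : T' ⊆ S := by
        intro x hx
        rcases Finset.mem_insert.1 (hsub hx) with rfl | h'
        · exact absurd hx haT
        · exact h'
      exact mem_filt.2 ⟨hTS, (cyl_insert_subset_iff hdet haS haT).1 hcyl⟩
  · rintro (h | ⟨T, hT, rfl⟩)
    · obtain ⟨hTS, hcyl⟩ := mem_filt.1 h
      refine mem_filt.2 ⟨hTS.trans (Finset.subset_insert a S), ?_⟩
      exact (cyl_insert_subset_iff hdet haS (fun haT => haS (hTS haT))).2 hcyl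
    · obtain ⟨hTS, hcyl⟩ := mem_filt.1 hT
      refine mem_filt.2 ⟨Finset.insert_subset_insert a hTS, ?_⟩
      exact (cyl_insert_insert_subset_iff hdet haS hTS).2 hcyl

theorem val_insert {a : W} {S : Finset W} {c : FR W} (hdet : Det S c) (haS : a ∉ S) :
    val m b (insert a S) c = val m b S c := by
  unfold val
  rw [filt_insert hdet haS, Finset.sup_union, sup_split m b (filt S c) filt_subset haS]

theorem val_union {S : Finset W} {c : FR W} (hdet : Det S c) (E : Finset W) :
    val m b (S ∪ E) c = val m b S c := by
  induction E using Finset.induction_on with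
  | empty => rw [Finset.union_empty]
  | @insert x E hxE ih =>
    rw [Finset.union_insert]
    by_cases hx : x ∈ S ∪ E
    · rw [Finset.insert_eq_self.2 hx]
      exact ih
    · rw [val_insert m b (hdet.mono Finset.subset_union_left) hx]
      exact ih

theorem val_eq_of_det {S S' : Finset W} {c : FR W} (hS : Det S c) (hS' : Det S' c) :
    val m b S c = val m b S' c := by
  rw [← val_union m b hS S', Finset.union_comm, val_union m b hS' S]

/-- The first-component homomorphism. -/
noncomputable def g1 (c : FR W) : β := val m b (exists_det c).choose c

theorem g1_eq {S : Finset W} {c : FR W} (hdet : Det S c) : g1 m b c = val m b S c :=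
  val_eq_of_det m b (exists_det c).choose_spec hdet

theorem g1_le (c : FR W) : g1 m b c ≤ m := val_le m b _ c

theorem g1_bot : g1 m b (⊥ : FR W) = ⊥ := val_bot m b _

theorem g1_top : g1 m b (⊤ : FR W) = m := val_top m b _

theorem g1_inf (c d : FR W) : g1 m b (c ⊓ d) = g1 m b c ⊓ g1 m b d := by
  obtain ⟨S1, h1⟩ := exists_det c
  obtain ⟨S2, h2⟩ := exists_det d
  have hc : Det (S1 ∪ S2) c := h1.mono Finset.subset_union_left
  have hd : Det (S1 ∪ S2) d := h2.mono Finset.subset_union_right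
  rw [g1_eq m b (hc.inf hd), g1_eq m b hc, g1_eq m b hd, val_inf]

theorem g1_sup (c d : FR W) : g1 m b (c ⊔ d) = g1 m b c ⊔ g1 m b d := by
  obtain ⟨S1, h1⟩ := exists_det c
  obtain ⟨S2, h2⟩ := exists_det d
  have hc : Det (S1 ∪ S2) c := h1.mono Finset.subset_union_left
  have hd : Det (S1 ∪ S2) d := h2.mono Finset.subset_union_right
  rw [g1_eq m b (hc.sup hd), g1_eq m b hc, g1_eq m b hd, val_sup m b hc hd]

theorem cyl_singleton_self (a : W) : cyl {a} {a} = xGen a := by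
  unfold cyl
  rw [Finset.inf_singleton, if_pos (Finset.mem_singleton_self a)]

theorem g1_xGen (a : W) : g1 m b (xGen a) = m ⊓ b a := by
  rw [g1_eq m b (det_xGen a)]
  unfold val
  have hfilt : filt {a} (xGen a) = {({a} : Finset W)} := by
    apply Finset.ext
    intro T
    rw [mem_filt, Finset.mem_singleton]
    constructor
    · rintro ⟨hsub, hcyl⟩
      rcases Finset.subset_singleton_iff.1 hsub with rfl | rfl
      · exfalso
        have h := hcyl (indicator_mem_cyl (S := ({a} : Finset W)) (T := (∅ : Finset W)))
        have := mem_xGen.1 (show _ ∈ xGen a from h)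
        simp at this
      · rfl
    · rintro rfl
      rw [cyl_singleton_self]
      exact ⟨Finset.Subset.refl _, Set.Subset.refl _⟩
  rw [hfilt, Finset.sup_singleton]
  unfold blk
  rw [Finset.inf_singleton, if_pos (Finset.mem_singleton_self a)]

end G1

end FrAux

namespace FrAux

section G2

variable {W : Type u} [Infinite W] [DecidableEq W] {β : Type v} [BooleanAlgebra β]
variable (c0 : β) (d : W → β)

theorem cofin_not_finite {s : Set W} (h : sᶜ.Finite) : ¬s.Finite := fun h' =>
  Set.infinite_univ (α := W) (Set.union_compl_self s ▸ h'.union h)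

open Classical in
/-- The second-component homomorphism. -/
noncomputable def g2 (v : FinCo W) : β :=
  if h : v.1.Finite then h.toFinset.sup d else c0 \ (v.2.resolve_left h).toFinset.sup d

theorem g2_fin {v : FinCo W} (h : v.1.Finite) : g2 c0 d v = h.toFinset.sup d := dif_pos h

theorem g2_cofin {v : FinCo W} (h : v.1ᶜ.Finite) : g2 c0 d v = c0 \ h.toFinset.sup d := by
  unfold g2
  rw [dif_neg (cofin_not_finite h)]

variable (hd : ∀ a a' : W, a ≠ a' → d a ⊓ d a' = ⊥) (hdc : ∀ a : W, d a ≤ c0)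

section WithHyp
include hd

theorem sup_d_inter (A B : Finset W) : A.sup d ⊓ B.sup d = (A ∩ B).sup d := by
  apply le_antisymm
  · rw [Finset.sup_inf_distrib_right]
    apply Finset.sup_le
    intro a ha
    rw [Finset.sup_inf_distrib_left]
    apply Finset.sup_le
    intro a' ha'
    by_cases haa : a = a'
    · subst haa
      exact inf_le_left.trans (Finset.le_sup (Finset.mem_inter.2 ⟨ha, ha'⟩))
    · rw [hd a a' haa]
      exact bot_le
  · apply Finset.sup_le
    intro a ha
    rw [Finset.mem_inter] at ha
    exact le_inf (Finset.le_sup ha.1) (Finset.le_sup ha.2)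

theorem sup_d_disj {a : W} {B : Finset W} (ha : a ∉ B) : d a ⊓ B.sup d = ⊥ := by
  have h := sup_d_inter d hd {a} B
  rw [Finset.sup_singleton, Finset.singleton_inter_of_notMem ha, Finset.sup_empty] at h
  exact h

end WithHyp

include hdc in
theorem g2_le (v : FinCo W) : g2 c0 d v ≤ c0 := by
  rcases v.2 with hv | hv
  · rw [g2_fin c0 d hv]
    exact Finset.sup_le fun a _ => hdc a
  · rw [g2_cofin c0 d hv]
    exact sdiff_le

theorem g2_bot : g2 c0 d (⊥ : FinCo W) = ⊥ := by
  have h : ((⊥ : FinCo W)).1.Finite := Set.finite_empty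
  rw [g2_fin c0 d h]
  have : h.toFinset = ∅ := by
    ext x
    simp [Set.Finite.mem_toFinset, finco_bot_val]
  rw [this, Finset.sup_empty]

theorem g2_top : g2 c0 d (⊤ : FinCo W) = c0 := by
  have h : ((⊤ : FinCo W)).1ᶜ.Finite := by
    rw [finco_top_val, Set.compl_univ]
    exact Set.finite_empty
  rw [g2_cofin c0 d h]
  have : h.toFinset = ∅ := by
    ext x
    simp [Set.Finite.mem_toFinset, finco_top_val]
  rw [this, Finset.sup_empty, sdiff_bot]

theorem g2_singleton (a : W) : g2 c0 d (singletonFinCo a) = d a := by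
  have h : (singletonFinCo a).1.Finite := Set.finite_singleton a
  rw [g2_fin c0 d h]
  have : h.toFinset = {a} := by
    ext x
    simp [Set.Finite.mem_toFinset, singletonFinCo_val]
  rw [this, Finset.sup_singleton]

include hd hdc in
theorem g2_inf_fc {v w : FinCo W} (hv : v.1.Finite) (hw : w.1ᶜ.Finite) :
    g2 c0 d (v ⊓ w) = g2 c0 d v ⊓ g2 c0 d w := by
  have hvw : (v ⊓ w).1.Finite := hv.subset (by rw [finco_inf_val]; exact Set.inter_subset_left)
  rw [g2_fin c0 d hvw, g2_fin c0 d hv, g2_cofin c0 d hw]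
  apply le_antisymm
  · apply Finset.sup_le
    intro x hx
    rw [Set.Finite.mem_toFinset, finco_inf_val] at hx
    refine le_inf (Finset.le_sup (hv.mem_toFinset.2 hx.1)) (le_sdiff.2 ⟨hdc x, ?_⟩)
    rw [disjoint_iff]
    apply sup_d_disj d hd
    rw [Set.Finite.mem_toFinset]
    exact fun hc => hc hx.2
  · rw [Finset.sup_inf_distrib_right]
    apply Finset.sup_le
    intro x hx
    rw [Set.Finite.mem_toFinset] at hx
    by_cases hxw : x ∈ w.1
    · refine inf_le_left.trans (Finset.le_sup ?_)
      rw [Set.Finite.mem_toFinset, finco_inf_val]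
      exact ⟨hx, hxw⟩
    · have h1 : d x ≤ hw.toFinset.sup d := Finset.le_sup (hw.mem_toFinset.2 hxw)
      have h2 : c0 \ hw.toFinset.sup d ≤ (hw.toFinset.sup d)ᶜ := by
        rw [sdiff_eq]; exact inf_le_right
      refine le_trans (le_trans (inf_le_inf h1 h2) ?_) bot_le
      rw [inf_compl_eq_bot]

include hd hdc in
theorem g2_inf (v w : FinCo W) : g2 c0 d (v ⊓ w) = g2 c0 d v ⊓ g2 c0 d w := by
  rcases v.2 with hv | hv <;> rcases w.2 with hw | hw
  · -- both finite
    have hvw : (v ⊓ w).1.Finite := hv.subset (by rw [finco_inf_val]; exact Set.inter_subset_left)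
    rw [g2_fin c0 d hvw, g2_fin c0 d hv, g2_fin c0 d hw, sup_d_inter d hd]
    congr 1
    ext x
    simp [Set.Finite.mem_toFinset, finco_inf_val]
  · exact g2_inf_fc c0 d hd hdc hv hw
  · rw [inf_comm v w, g2_inf_fc c0 d hd hdc hw hv, inf_comm]
  · -- both cofinite
    have hvw : (v ⊓ w).1ᶜ.Finite := by
      rw [finco_inf_val, Set.compl_inter]
      exact hv.union hw
    rw [g2_cofin c0 d hvw, g2_cofin c0 d hv, g2_cofin c0 d hw, ← sdiff_sup]
    congr 1
    rw [← Finset.sup_union]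
    congr 1
    ext x
    simp [Set.Finite.mem_toFinset, finco_inf_val, Set.compl_inter]

include hdc in
theorem g2_compl (v : FinCo W) : g2 c0 d vᶜ = c0 \ g2 c0 d v := by
  rcases v.2 with hv | hv
  · have h' : ((vᶜ : FinCo W)).1ᶜ.Finite := by
      rw [finco_compl_val, compl_compl]
      exact hv
    rw [g2_cofin c0 d h', g2_fin c0 d hv]
    congr 1
    apply Finset.sup_congr _ fun _ _ => rfl
    ext x
    simp [Set.Finite.mem_toFinset, finco_compl_val]
  · have h' : ((vᶜ : FinCo W)).1.Finite := by
      rw [finco_compl_val]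
      exact hv
    rw [g2_fin c0 d h', g2_cofin c0 d hv, sdiff_sdiff_right_self]
    have hsup : h'.toFinset.sup d = hv.toFinset.sup d := by
      apply Finset.sup_congr _ fun _ _ => rfl
      ext x
      simp [Set.Finite.mem_toFinset, finco_compl_val]
    rw [hsup]
    exact (inf_eq_right.2 (Finset.sup_le fun a _ => hdc a)).symm

include hd hdc in
theorem g2_sup (v w : FinCo W) : g2 c0 d (v ⊔ w) = g2 c0 d v ⊔ g2 c0 d w := by
  have he : (vᶜ ⊓ wᶜ)ᶜ = v ⊔ w := by rw [compl_inf, compl_compl, compl_compl]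
  have h1 := g2_compl c0 d hdc (vᶜ ⊓ wᶜ)
  rw [he] at h1
  rw [h1, g2_inf c0 d hd hdc, g2_compl c0 d hdc v, g2_compl c0 d hdc w, ← sdiff_sup,
    sdiff_sdiff_right_self]
  exact inf_eq_right.2 (sup_le (g2_le c0 d hdc v) (g2_le c0 d hdc w))

end G2

end FrAux

namespace FrAux

theorem cross_inf {β : Type v} [BooleanAlgebra β] {c0 x1 y1 x2 y2 : β}
    (hx1 : x1 ≤ c0ᶜ) (hy1 : y1 ≤ c0ᶜ) (hx2 : x2 ≤ c0) (hy2 : y2 ≤ c0) :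
    (x1 ⊔ x2) ⊓ (y1 ⊔ y2) = (x1 ⊓ y1) ⊔ (x2 ⊓ y2) := by
  have h12 : x1 ⊓ y2 = ⊥ :=
    le_bot_iff.1 ((inf_le_inf hx1 hy2).trans (by rw [compl_inf_eq_bot]))
  have h21 : x2 ⊓ y1 = ⊥ :=
    le_bot_iff.1 ((inf_le_inf hx2 hy1).trans (by rw [inf_compl_eq_bot]))
  rw [inf_sup_right, inf_sup_left, inf_sup_left, h12, h21, sup_bot_eq, bot_sup_eq]

theorem nfree {W : Type u} [Infinite W] [DecidableEq W] : NFree.{u, v} 3 (Xset W) := by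
  intro β _ _ f hpres
  set c0 : β := f zElt with hc0
  set bb : W → β := fun a => f (P a) with hbb
  set dd : W → β := fun a => c0 ⊓ bb a with hdd
  have hd : ∀ a a' : W, a ≠ a' → dd a ⊓ dd a' = ⊥ := by
    intro a a' haa
    have harr : (Finset.univ : Finset (Fin 3)).inf ![zElt (W := W), P a, P a'] = ⊥ := by
      rw [show (Finset.univ : Finset (Fin 3)) = {0, 1, 2} from rfl]
      rw [Finset.inf_insert, Finset.inf_insert, Finset.inf_singleton]
      exact triple_inf_bot haa
    have hmem : ∀ i : Fin 3, (![zElt (W := W), P a, P a'] : Fin 3 → _) i ∈ Xset W := by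
      intro i
      fin_cases i
      · exact zElt_mem_Xset
      · exact P_mem_Xset a
      · exact P_mem_Xset a'
    have h3 := hpres ![zElt, P a, P a'] hmem harr
    rw [show (Finset.univ : Finset (Fin 3)) = {0, 1, 2} from rfl] at h3
    rw [Finset.inf_insert, Finset.inf_insert, Finset.inf_singleton] at h3
    have h3' : c0 ⊓ (bb a ⊓ bb a') = ⊥ := h3
    apply le_bot_iff.1
    rw [← h3']
    exact le_inf (inf_le_left.trans inf_le_left)
      (le_inf (inf_le_left.trans inf_le_right) (inf_le_right.trans inf_le_right))
  have hdc : ∀ a : W, dd a ≤ c0 := fun a => inf_le_left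
  set m : β := c0ᶜ with hm
  let G : BoundedLatticeHom (FR W × FinCo W) β :=
    { toFun := fun p => g1 m bb p.1 ⊔ g2 c0 dd p.2
      map_sup' := by
        intro p q
        show g1 m bb (p.1 ⊔ q.1) ⊔ g2 c0 dd (p.2 ⊔ q.2) = _
        rw [g1_sup, g2_sup c0 dd hd hdc]
        exact sup_sup_sup_comm _ _ _ _
      map_inf' := by
        intro p q
        show g1 m bb (p.1 ⊓ q.1) ⊔ g2 c0 dd (p.2 ⊓ q.2) = _
        rw [g1_inf, g2_inf c0 dd hd hdc]
        exact (cross_inf (g1_le m bb p.1) (g1_le m bb q.1)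
          (g2_le c0 dd hdc p.2) (g2_le c0 dd hdc q.2)).symm
      map_top' := by
        show g1 m bb ⊤ ⊔ g2 c0 dd ⊤ = ⊤
        rw [g1_top, g2_top]
        exact compl_sup_eq_top
      map_bot' := by
        show g1 m bb ⊥ ⊔ g2 c0 dd ⊥ = ⊥
        rw [g1_bot, g2_bot, sup_bot_eq] }
  have hG : ∀ x ∈ Xset W, G x = f x := by
    intro x hx
    rcases mem_Xset hx with ⟨a, rfl⟩ | rfl
    · show g1 m bb (xGen a) ⊔ g2 c0 dd (singletonFinCo a) = f (P a)
      rw [g1_xGen, g2_singleton]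
      show m ⊓ bb a ⊔ c0 ⊓ bb a = f (P a)
      rw [← inf_sup_right, compl_sup_eq_top, top_inf_eq]
    · show g1 m bb ⊥ ⊔ g2 c0 dd ⊤ = f zElt
      rw [g1_bot, g2_top, bot_sup_eq]
  refine ⟨G, hG, ?_⟩
  intro g' hg'
  apply DFunLike.ext
  intro p
  induction generates (W := W) p with
  | base h => rw [hg' _ h, hG _ h]
  | bot => rw [map_bot, map_bot]
  | top => rw [map_top, map_top]
  | compl _ ih => rw [map_compl', map_compl', ih]
  | sup _ _ ih1 ih2 => rw [map_sup, map_sup, ih1, ih2]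
  | inf _ _ ih1 ih2 => rw [map_inf, map_inf, ih1, ih2]

end FrAux

/-- For `W` of cardinality `ℵ₁`, the set `{(x_α, {α}) : α ∈ W} ∪ {(⊥, ⊤)}` is a
`3`-independent generating set of `FR(W) × FinCo(W)`; in particular this product
algebra is `3`-free (over this set). -/
theorem fr_prod_finCo_threeFree {W : Type u} (hW : Cardinal.mk W = Cardinal.aleph 1) :
    NIndependent 3
        ((Set.range fun a : W => ((xGen a, singletonFinCo a) : FR W × FinCo W)) ∪
          {((⊥ : FR W), (⊤ : FinCo W))}) ∧
    Generates
        ((Set.range fun a : W => ((xGen a, singletonFinCo a) : FR W × FinCo W)) ∪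
          {((⊥ : FR W), (⊤ : FinCo W))}) ∧
    NFree.{u, v} 3
        ((Set.range fun a : W => ((xGen a, singletonFinCo a) : FR W × FinCo W)) ∪
          {((⊥ : FR W), (⊤ : FinCo W))}) := by
  have hinf : Infinite W := by
    rw [Cardinal.infinite_iff, hW]
    exact Cardinal.aleph0_le_aleph 1
  letI := Classical.decEq W
  exact ⟨FrAux.indep, FrAux.generates, FrAux.nfree⟩
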